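/- Let N and d be positive integers with N ≥ d+1, let 1 ≤ p ≤ 2, and let A be a real N×N matrix of rank d with all diagonal entries equal to 1. Then E_p(A) ≥ M(1/(N−d), p, N), where M(c, p, N) is the infimum of ∑_{i=1}^N (t_i/(c − t_i))^{p/2} over all tuples (t_1, …, t_N) with t_i ∈ [0, c) for each i and ∑_{i=1}^N t_i = 1. -/

import Mathlib

open Finset Module

private lemma rpow_sum_le_sum_rpow_aux {ι : Type*} (s : Finset ι) (f : ι → ℝ)
    (hf : ∀ i ∈ s, 0 ≤ f i) {r : ℝ} (hr0 : 0 < r) (hr1 : r ≤ 1) :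
    (∑ i ∈ s, f i) ^ r ≤ ∑ i ∈ s, f i ^ r := by
  classical
  induction s using Finset.induction with
  | empty => simp [Real.zero_rpow hr0.ne']
  | @insert a s ha ih =>
    rw [Finset.sum_insert ha, Finset.sum_insert ha]
    have h1 : 0 ≤ f a := hf a (mem_insert_self a s)
    have h2 : 0 ≤ ∑ i ∈ s, f i := Finset.sum_nonneg fun i hi => hf i (mem_insert_of_mem hi)
    have key : (f a + ∑ i ∈ s, f i) ^ r ≤ f a ^ r + (∑ i ∈ s, f i) ^ r := by
      have h3 := NNReal.rpow_add_le_add_rpow ⟨f a, h1⟩ ⟨∑ i ∈ s, f i, h2⟩ hr0.le hr1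
      have h4 := NNReal.coe_le_coe.2 h3
      exact Real.rpow_add_le_add_rpow h1 h2 hr0.le hr1
    refine key.trans ?_
    exact add_le_add_right (ih fun i hi => hf i (mem_insert_of_mem hi)) _

theorem pFrameEnergy_ge_M_of_le_two (N d : ℕ) (hd : 0 < d) (hN : d + 1 ≤ N)
    (p : ℝ) (hp1 : 1 ≤ p) (hp2 : p ≤ 2)
    (A : Matrix (Fin N) (Fin N) ℝ) (hrank : A.rank = d) (hdiag : ∀ i, A i i = 1) :
    sInf {s : ℝ | ∃ t : Fin N → ℝ,
        (∀ i, 0 ≤ t i ∧ t i < 1 / ((N : ℝ) - (d : ℝ))) ∧ (∑ i, t i = 1) ∧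
        s = ∑ i, (t i / (1 / ((N : ℝ) - (d : ℝ)) - t i)) ^ (p / 2)} ≤
      ∑ i, ∑ j, if i = j then 0 else |A i j| ^ p := by
  classical
  -- kernel of A as a subspace of Euclidean space
  let e : EuclideanSpace ℝ (Fin N) ≃ₗ[ℝ] (Fin N → ℝ) := WithLp.linearEquiv 2 ℝ (Fin N → ℝ)
  let K : Submodule ℝ (EuclideanSpace ℝ (Fin N)) := (LinearMap.ker A.mulVecLin).comap e.toLinearMap
  have hKmem : ∀ x : EuclideanSpace ℝ (Fin N), x ∈ K ↔ A.mulVec (e x) = 0 := by intro x; rfl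
  have hKrank : finrank ℝ K = N - d := by
    have h2 := LinearMap.finrank_range_add_finrank_ker A.mulVecLin
    have h3 : finrank ℝ (LinearMap.range A.mulVecLin) = d := hrank
    rw [Module.finrank_pi] at h2
    simp only [Fintype.card_fin, h3] at h2
    have h4 : finrank ℝ K = finrank ℝ (LinearMap.ker A.mulVecLin) := by
      rw [show K = (LinearMap.ker A.mulVecLin).comap e.toLinearMap from rfl,
        Submodule.comap_equiv_eq_map_symm]
      exact LinearEquiv.finrank_map_eq e.symm _
    omega
  let v : Fin (finrank ℝ K) → (Fin N → ℝ) :=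
    fun k i => (stdOrthonormalBasis ℝ K k : EuclideanSpace ℝ (Fin N)) i
  have hvker : ∀ k, A.mulVec (v k) = 0 := by
    intro k
    have h := (stdOrthonormalBasis ℝ K k).2
    rw [hKmem] at h
    exact h
  have hvortho : ∀ k l, ∑ i, v k i * v l i = (if k = l then (1:ℝ) else 0) := by
    intro k l
    have h := orthonormal_iff_ite.mp (stdOrthonormalBasis ℝ K).orthonormal k l
    rw [Submodule.coe_inner, PiLp.inner_apply] at h
    simp only [RCLike.inner_apply, starRingEnd_apply, star_trivial] at h
    rw [← h]
    exact Finset.sum_congr rfl fun x _ => mul_comm _ _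
  -- the projection matrix Q
  set Q : Fin N → Fin N → ℝ := fun i j => ∑ k, v k i * v k j with hQ
  have hQsym : ∀ i j, Q i j = Q j i := by
    intro i j; simp only [hQ]; exact Finset.sum_congr rfl fun k _ => mul_comm _ _
  have hAQ : ∀ i l, ∑ j, A i j * Q j l = 0 := by
    intro i l
    have : ∑ j, A i j * Q j l = ∑ k, (A.mulVec (v k)) i * v k l := by
      simp only [hQ, Finset.mul_sum]
      rw [Finset.sum_comm]
      refine Finset.sum_congr rfl fun k _ => ?_
      simp only [Matrix.mulVec, dotProduct, Finset.sum_mul]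
      exact Finset.sum_congr rfl fun j _ => by ring
    rw [this]
    simp [hvker]
  have hQsq : ∀ i, ∑ j, Q i j * Q j i = Q i i := by
    intro i
    have : ∑ j, Q i j * Q j i = ∑ k, ∑ l, (v k i * v l i) * ∑ j, v k j * v l j := by
      simp only [hQ, Finset.sum_mul_sum]
      rw [Finset.sum_comm]
      refine Finset.sum_congr rfl fun k _ => ?_
      rw [Finset.sum_comm]
      refine Finset.sum_congr rfl fun l _ => ?_
      rw [Finset.mul_sum]
      exact Finset.sum_congr rfl fun j _ => by ring
    rw [this]
    simp only [hvortho, mul_ite, mul_one, mul_zero]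
    simp [hQ]
  have htr : ∑ i, Q i i = ((N - d : ℕ) : ℝ) := by
    simp only [hQ]
    rw [Finset.sum_comm]
    have : ∀ k, ∑ i, v k i * v k i = (1:ℝ) := by
      intro k; rw [hvortho k k]; simp
    simp only [this, Finset.sum_const, Finset.card_univ, Fintype.card_fin, nsmul_eq_mul, mul_one,
      hKrank]
  have hQ0 : ∀ i, 0 ≤ Q i i := by
    intro i
    exact Finset.sum_nonneg fun k _ => mul_self_nonneg _
  have hQlt1 : ∀ i, Q i i < 1 := by
    intro i
    by_contra hcon
    push_neg at hcon
    have hsq : ∑ j, ((if j = i then (1:ℝ) else 0) - Q i j) ^ 2 = 1 - Q i i := by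
      have expand : ∀ j, ((if j = i then (1:ℝ) else 0) - Q i j) ^ 2
          = (if j = i then (1:ℝ) else 0) ^ 2 - 2 * ((if j = i then (1:ℝ) else 0) * Q i j)
            + Q i j * Q j i := by
        intro j; rw [hQsym i j]; ring
      rw [Finset.sum_congr rfl fun j _ => expand j]
      rw [Finset.sum_add_distrib, Finset.sum_sub_distrib, hQsq i]
      have e1 : ∑ j : Fin N, ((if j = i then (1:ℝ) else 0) ^ 2) = 1 := by
        rw [Finset.sum_eq_single i (fun b _ hb => by rw [if_neg hb]; ring)
          (fun h => absurd (Finset.mem_univ i) h)]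
        simp
      have e2 : ∑ j : Fin N, 2 * ((if j = i then (1:ℝ) else 0) * Q i j) = 2 * Q i i := by
        rw [Finset.sum_eq_single i (fun b _ hb => by rw [if_neg hb]; ring)
          (fun h => absurd (Finset.mem_univ i) h)]
        simp
      rw [e1, e2]
      ring
    have hge : 0 ≤ ∑ j, ((if j = i then (1:ℝ) else 0) - Q i j) ^ 2 :=
      Finset.sum_nonneg fun j _ => sq_nonneg _
    have heq : Q i i = 1 := le_antisymm (by linarith [hsq ▸ hge]) hcon
    have hzero : ∀ j, ((if j = i then (1:ℝ) else 0) - Q i j) ^ 2 = 0 := by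
      have hs0 : ∑ j, ((if j = i then (1:ℝ) else 0) - Q i j) ^ 2 = 0 := by
        rw [hsq, heq]; ring
      intro j
      exact (Finset.sum_eq_zero_iff_of_nonneg fun j _ => sq_nonneg _).mp hs0 j (mem_univ j)
    have hQi : ∀ j, Q i j = if j = i then (1:ℝ) else 0 := by
      intro j
      have h5 := hzero j
      have h6 := pow_eq_zero_iff (n := 2) (by norm_num) |>.mp h5
      linarith [h6]
    have h0 : ∑ j, A i j * Q j i = A i i := by
      rw [Finset.sum_congr rfl fun j _ => by rw [← hQsym i j, hQi j]]
      simp only [mul_ite, mul_one, mul_zero, Finset.sum_ite_eq', Finset.mem_univ, if_true]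
    rw [hAQ i i, hdiag i] at h0
    exact one_ne_zero h0.symm
  -- arithmetic facts
  have hdN : (d : ℝ) < (N : ℝ) := by exact_mod_cast Nat.lt_of_lt_of_le (Nat.lt_succ_self d) hN
  have hD : (0:ℝ) < (N : ℝ) - d := by linarith
  have hDcast : ((N - d : ℕ) : ℝ) = (N : ℝ) - d := by
    rw [Nat.cast_sub (by omega)]
  have hp20 : 0 < p / 2 := by linarith
  have hp21 : p / 2 ≤ 1 := by linarith
  -- per-row estimate
  have habs : ∀ a : ℝ, (|a| ^ 2) ^ (p / 2) = |a| ^ p := by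
    intro a
    rw [← Real.rpow_natCast |a| 2, ← Real.rpow_mul (abs_nonneg a)]
    norm_num
    congr 1
    ring
  have hrow : ∀ i, (Q i i / (1 - Q i i)) ^ (p / 2) ≤ ∑ j, (if i = j then 0 else |A i j| ^ p) := by
    intro i
    have hq1 : Q i i < 1 := hQlt1 i
    have hq0 : 0 ≤ Q i i := hQ0 i
    have h1q : (0:ℝ) < 1 - Q i i := by linarith
    have hsum_if : ∑ j, (if i = j then (0:ℝ) else |A i j| ^ p)
        = ∑ j ∈ Finset.univ.erase i, |A i j| ^ p := by
      have h5 := Finset.add_sum_erase Finset.univ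
        (fun j => if i = j then (0:ℝ) else |A i j| ^ p) (Finset.mem_univ i)
      simp only [if_true, eq_self_iff_true, zero_add] at h5
      rw [← h5]
      exact Finset.sum_congr rfl fun j hj => by
        rw [if_neg (Ne.symm (Finset.ne_of_mem_erase hj))]
    rw [hsum_if]
    rcases eq_or_lt_of_le hq0 with h0 | h0
    · rw [← h0]
      simp only [zero_div, Real.zero_rpow hp20.ne']
      exact Finset.sum_nonneg fun j _ => Real.rpow_nonneg (abs_nonneg _) p
    · -- Q i i > 0
      -- the off-diagonal row of Q squared sums to q - q^2
      have hQrow : ∑ j ∈ Finset.univ.erase i, |Q j i| ^ 2 = Q i i - Q i i ^ 2 := by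
        have h7 : Q i i * Q i i + ∑ j ∈ Finset.univ.erase i, Q i j * Q j i = Q i i := by
          have h7' := Finset.add_sum_erase Finset.univ (fun j => Q i j * Q j i)
            (Finset.mem_univ i)
          rw [hQsq i] at h7'
          exact h7'
        have h8 : ∑ j ∈ Finset.univ.erase i, |Q j i| ^ 2
            = ∑ j ∈ Finset.univ.erase i, Q i j * Q j i := by
          refine Finset.sum_congr rfl fun j _ => ?_
          rw [sq_abs, hQsym i j]; ring
        rw [h8]; nlinarith [h7]
      -- q is at most the inner product of the rows
      have hTineq : Q i i ≤ ∑ j ∈ Finset.univ.erase i, |A i j| * |Q j i| := by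
        have h7 : Q i i + ∑ j ∈ Finset.univ.erase i, A i j * Q j i = 0 := by
          have h7' := Finset.add_sum_erase Finset.univ (fun j => A i j * Q j i)
            (Finset.mem_univ i)
          rw [hdiag i, one_mul, hAQ i i] at h7'
          exact h7'
        have h8 : -∑ j ∈ Finset.univ.erase i, A i j * Q j i
            ≤ ∑ j ∈ Finset.univ.erase i, |A i j| * |Q j i| := by
          rw [← Finset.sum_neg_distrib]
          refine Finset.sum_le_sum fun j _ => ?_
          rw [← abs_mul]
          exact neg_le_abs _
        linarith
      -- Cauchy-Schwarz
      have hCS := Finset.sum_mul_sq_le_sq_mul_sq (Finset.univ.erase i)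
        (fun j => |A i j|) (fun j => |Q j i|)
      set T := ∑ j ∈ Finset.univ.erase i, |A i j| ^ 2 with hT
      have hT0 : 0 ≤ T := Finset.sum_nonneg fun j _ => sq_nonneg _
      have hkey : Q i i ^ 2 ≤ T * (Q i i - Q i i ^ 2) := by
        have h9 : Q i i ^ 2 ≤ (∑ j ∈ Finset.univ.erase i, |A i j| * |Q j i|) ^ 2 := by
          have hnn : 0 ≤ ∑ j ∈ Finset.univ.erase i, |A i j| * |Q j i| :=
            Finset.sum_nonneg fun j _ => mul_nonneg (abs_nonneg _) (abs_nonneg _)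
          exact pow_le_pow_left₀ hq0 hTineq 2
        calc Q i i ^ 2 ≤ (∑ j ∈ Finset.univ.erase i, |A i j| * |Q j i|) ^ 2 := h9
          _ ≤ T * ∑ j ∈ Finset.univ.erase i, |Q j i| ^ 2 := hCS
          _ = T * (Q i i - Q i i ^ 2) := by rw [hQrow]
      have hTlb : Q i i / (1 - Q i i) ≤ T := by
        rw [div_le_iff₀ h1q]
        nlinarith [hkey]
      calc (Q i i / (1 - Q i i)) ^ (p / 2)
          ≤ T ^ (p / 2) :=
            Real.rpow_le_rpow (div_nonneg hq0 h1q.le) hTlb hp20.le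
        _ ≤ ∑ j ∈ Finset.univ.erase i, (|A i j| ^ 2) ^ (p / 2) :=
            rpow_sum_le_sum_rpow_aux _ _ (fun j _ => sq_nonneg _) hp20 hp21
        _ = ∑ j ∈ Finset.univ.erase i, |A i j| ^ p :=
            Finset.sum_congr rfl fun j _ => habs _
  -- the witness tuple
  set D : ℝ := (N : ℝ) - d with hDdef
  set t : Fin N → ℝ := fun i => Q i i / D with ht
  have hmem : (∑ i, (Q i i / (1 - Q i i)) ^ (p / 2)) ∈ {s : ℝ | ∃ t : Fin N → ℝ,
      (∀ i, 0 ≤ t i ∧ t i < 1 / ((N : ℝ) - (d : ℝ))) ∧ (∑ i, t i = 1) ∧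
      s = ∑ i, (t i / (1 / ((N : ℝ) - (d : ℝ)) - t i)) ^ (p / 2)} := by
    refine ⟨t, fun i => ⟨div_nonneg (hQ0 i) hD.le, ?_⟩, ?_, ?_⟩
    · show Q i i / D < 1 / D
      exact div_lt_div_of_pos_right (hQlt1 i) hD
    · rw [ht]
      simp only
      rw [← Finset.sum_div, htr, hDcast, div_self hD.ne']
    · refine Finset.sum_congr rfl fun i _ => ?_
      have h1q : (0:ℝ) < 1 - Q i i := by linarith [hQlt1 i]
      have hsub : 1 / D - t i = (1 - Q i i) / D := by
        show 1 / D - Q i i / D = (1 - Q i i) / D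
        rw [sub_div]
      rw [show (1 / ((N : ℝ) - (d : ℝ)) - t i) = (1 - Q i i) / D from hsub]
      rw [show t i = Q i i / D from rfl]
      congr 1
      field_simp
  have hbdd : BddBelow {s : ℝ | ∃ t : Fin N → ℝ,
      (∀ i, 0 ≤ t i ∧ t i < 1 / ((N : ℝ) - (d : ℝ))) ∧ (∑ i, t i = 1) ∧
      s = ∑ i, (t i / (1 / ((N : ℝ) - (d : ℝ)) - t i)) ^ (p / 2)} := by
    refine ⟨0, ?_⟩
    rintro s ⟨u, hu, -, rfl⟩
    refine Finset.sum_nonneg fun i _ => Real.rpow_nonneg ?_ _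
    have := (hu i).1
    have h2 := (hu i).2
    have : 0 ≤ 1 / ((N : ℝ) - (d : ℝ)) - u i := by linarith
    exact div_nonneg (hu i).1 this
  refine (csInf_le hbdd hmem).trans ?_
  exact Finset.sum_le_sum fun i _ => hrow i
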